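/- Fix β real with 0 < |β| < 1, α = √(1−β²), x₁, x₂ ∈ ℝ with x₁ ≠ (π/α)(1/2+k) for every integer k. Let B, Bₜ be the breather profile with parameters (β, x₁, x₂), K the complex kink profile and K̄ the conjugate complex kink profile with the same parameters. Then: (i) for all x ∈ ℝ, K(x) − K̄(x) = 4·arctan(i·sin(α x₁)/cosh(β(x+x₂))), where arctan is the principal complex arctangent (the argument has modulus < 1, hence avoids the branch cuts); (ii) for all x ∈ ℝ, 1/cos²(B(x)/4) = 1 + (β sin(α x₁)/(α cosh(β(x+x₂))))² and tan²(B(x)/4) = (β sin(α x₁)/(α cosh(β(x+x₂))))²; moreover, for every ℓ ∈ ℂ and every x ∈ ℝ such that α² cosh²(β(x+x₂)) + ℓ² β² sin²(α x₁) ≠ 0: Bₜ(x)·(1/cos²(B(x)/4))/(1 + ℓ²·tan²(B(x)/4)) = 4α²β cos(α x₁) cosh(β(x+x₂))/(α² cosh²(β(x+x₂)) + ℓ² β² sin²(α x₁)). -/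

import Mathlib

open Complex

lemma exp_two_I_arctan {z : ℂ} (h₁ : 1 + z * I ≠ 0) (h₂ : 1 - z * I ≠ 0) :
    Complex.exp (2 * I * Complex.arctan z) = (1 + z * I) / (1 - z * I) := by
  rw [Complex.arctan,
    show 2 * I * (-I / 2 * Complex.log ((1 + z * I) / (1 - z * I)))
      = -(I * I) * Complex.log ((1 + z * I) / (1 - z * I)) by ring,
    Complex.I_mul_I]
  norm_num
  exact Complex.exp_log (div_ne_zero h₁ h₂)

lemma one_pm_mul_I_ne {z : ℂ} (hz : z.re ≠ 0) : 1 + z * I ≠ 0 ∧ 1 - z * I ≠ 0 := by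
  constructor <;> intro h <;> apply hz
  · rw [show z = I by linear_combination (-I) * h + z * Complex.I_sq]; simp
  · rw [show z = -I by linear_combination I * h + z * Complex.I_sq]; simp

lemma arctan_re_eq_arg (z : ℂ) :
    (Complex.arctan z).re = ((1 + z * I) / (1 - z * I)).arg / 2 := by
  simp [Complex.arctan, Complex.mul_re, Complex.log_im, Complex.log_re]
  ring

lemma arctan_sub_eq {u v w : ℂ}
    (hu₁ : 1 + u * I ≠ 0) (hu₂ : 1 - u * I ≠ 0)
    (hv₁ : 1 + v * I ≠ 0) (hv₂ : 1 - v * I ≠ 0)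
    (hw₁ : 1 + w * I ≠ 0) (hw₂ : 1 - w * I ≠ 0)
    (hprod : (1 + u * I) * (1 - v * I) * (1 - w * I)
      = (1 + w * I) * (1 - u * I) * (1 + v * I))
    (hre : (Complex.arctan u - Complex.arctan v - Complex.arctan w).re = 0) :
    Complex.arctan u - Complex.arctan v = Complex.arctan w := by
  have key : Complex.exp (2 * I * (arctan u - arctan v - arctan w)) = 1 := by
    rw [show 2 * I * (arctan u - arctan v - arctan w)
        = 2 * I * arctan u - (2 * I * arctan v + 2 * I * arctan w) by ring,
      Complex.exp_sub, Complex.exp_add, exp_two_I_arctan hu₁ hu₂,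
      exp_two_I_arctan hv₁ hv₂, exp_two_I_arctan hw₁ hw₂]
    rw [div_mul_div_comm, div_div_div_eq,
      div_eq_one_iff_eq (mul_ne_zero hu₂ (mul_ne_zero hv₁ hw₁))]
    linear_combination hprod
  obtain ⟨n, hn⟩ := Complex.exp_eq_one_iff.mp key
  have ht : arctan u - arctan v - arctan w = (n : ℂ) * (Real.pi : ℂ) :=
    mul_left_cancel₀ (by simp [Complex.I_ne_zero] : (2 : ℂ) * I ≠ 0)
      (by rw [hn]; ring)
  have hn0 : (n : ℝ) * Real.pi = 0 := by
    have := congrArg Complex.re ht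
    rw [hre] at this
    simpa using this.symm
  have : (n : ℝ) = 0 := by
    rcases mul_eq_zero.mp hn0 with h | h
    · exact h
    · exact absurd h Real.pi_ne_zero
  have hnC : (n : ℂ) = 0 := by exact_mod_cast this
  rw [hnC, zero_mul] at ht
  linear_combination ht

lemma aux_div (A Bb C S CB L : ℂ) (hA : A ≠ 0) (hC : C ≠ 0)
    (hD : A ^ 2 * C ^ 2 + Bb ^ 2 * S ^ 2 ≠ 0)
    (hden : A ^ 2 * C ^ 2 + L ^ 2 * Bb ^ 2 * S ^ 2 ≠ 0) :
    (4 * A ^ 2 * Bb * CB * C / (A ^ 2 * C ^ 2 + Bb ^ 2 * S ^ 2))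
        * (1 + (Bb * S / (A * C)) ^ 2) / (1 + L ^ 2 * ((Bb * S / (A * C)) ^ 2))
      = 4 * A ^ 2 * Bb * CB * C / (A ^ 2 * C ^ 2 + L ^ 2 * Bb ^ 2 * S ^ 2) := by
  have h1 : 1 + (Bb * S / (A * C)) ^ 2
      = (A ^ 2 * C ^ 2 + Bb ^ 2 * S ^ 2) / (A ^ 2 * C ^ 2) := by
    field_simp
  have h2 : 1 + L ^ 2 * ((Bb * S / (A * C)) ^ 2)
      = (A ^ 2 * C ^ 2 + L ^ 2 * Bb ^ 2 * S ^ 2) / (A ^ 2 * C ^ 2) := by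
    field_simp
  rw [h1, h2]
  field_simp

/-- **Auxiliary identities for the permutability argument (Lemma 8.2).**
With `0 < |β| < 1`, `α = √(1−β²)` and `x₁` nondegenerate:
(i) `K − K̄ = 4 arctan(i sin(αx₁)/cosh(β(x+x₂)))`;
(ii) `sec²(B/4) = 1 + (β sin(αx₁)/(α cosh(β(x+x₂))))²`,
`tan²(B/4) = (β sin(αx₁)/(α cosh(β(x+x₂))))²`, and for any `ℓ ∈ ℂ` with nonvanishing
denominator, `Bₜ sec²(B/4)/(1+ℓ²tan²(B/4))
  = 4α²β cos(αx₁)cosh(β(x+x₂))/(α²cosh²(β(x+x₂))+ℓ²β²sin²(αx₁))`. -/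
theorem permutability_auxiliary_identities (β x₁ x₂ : ℝ)
    (hβ0 : 0 < |β|) (hβ1 : |β| < 1)
    (α : ℝ) (hα : α = Real.sqrt (1 - β ^ 2))
    (hx₁ : ∀ k : ℤ, x₁ ≠ (Real.pi / α) * (1 / 2 + (k : ℝ)))
    (B Bt : ℝ → ℝ)
    (hB : ∀ x : ℝ, B x
      = 4 * Real.arctan (β * Real.sin (α * x₁) / (α * Real.cosh (β * (x + x₂)))))
    (hBt : ∀ x : ℝ, Bt x
      = 4 * α ^ 2 * β * Real.cos (α * x₁) * Real.cosh (β * (x + x₂))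
          / (α ^ 2 * (Real.cosh (β * (x + x₂))) ^ 2 + β ^ 2 * (Real.sin (α * x₁)) ^ 2))
    (K Kbar : ℝ → ℂ)
    (hK : ∀ x : ℝ, K x = 4 * Complex.arctan (Complex.exp
      ((β : ℂ) * ((x : ℂ) + (x₂ : ℂ)) + Complex.I * (α : ℂ) * (x₁ : ℂ))))
    (hKbar : ∀ x : ℝ, Kbar x = 4 * Complex.arctan (Complex.exp
      ((β : ℂ) * ((x : ℂ) + (x₂ : ℂ)) - Complex.I * (α : ℂ) * (x₁ : ℂ)))) :
    -- (i)
    (∀ x : ℝ, K x - Kbar x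
      = 4 * Complex.arctan (Complex.I * ((Real.sin (α * x₁) : ℝ) : ℂ)
          / ((Real.cosh (β * (x + x₂)) : ℝ) : ℂ))) ∧
    -- (ii) real trigonometric identities
    (∀ x : ℝ, 1 / (Real.cos (B x / 4)) ^ 2
      = 1 + (β * Real.sin (α * x₁) / (α * Real.cosh (β * (x + x₂)))) ^ 2) ∧
    (∀ x : ℝ, (Real.tan (B x / 4)) ^ 2
      = (β * Real.sin (α * x₁) / (α * Real.cosh (β * (x + x₂)))) ^ 2) ∧
    -- and, for every ℓ ∈ ℂ with nonvanishing denominator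
    (∀ (ℓ : ℂ) (x : ℝ),
      (α : ℂ) ^ 2 * ((Real.cosh (β * (x + x₂)) : ℝ) : ℂ) ^ 2
        + ℓ ^ 2 * (β : ℂ) ^ 2 * ((Real.sin (α * x₁) : ℝ) : ℂ) ^ 2 ≠ 0 →
      (Bt x : ℂ) * (1 / ((Real.cos (B x / 4) : ℝ) : ℂ) ^ 2)
          / (1 + ℓ ^ 2 * ((Real.tan (B x / 4) : ℝ) : ℂ) ^ 2)
        = 4 * (α : ℂ) ^ 2 * (β : ℂ) * ((Real.cos (α * x₁) : ℝ) : ℂ)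
            * ((Real.cosh (β * (x + x₂)) : ℝ) : ℂ)
          / ((α : ℂ) ^ 2 * ((Real.cosh (β * (x + x₂)) : ℝ) : ℂ) ^ 2
              + ℓ ^ 2 * (β : ℂ) ^ 2 * ((Real.sin (α * x₁) : ℝ) : ℂ) ^ 2)) := by
  have hβ2 : β ^ 2 < 1 := by
    have := abs_lt.mp hβ1
    nlinarith
  have hα0 : 0 < α := by
    rw [hα]; exact Real.sqrt_pos.mpr (by linarith)
  have hα2 : α ^ 2 = 1 - β ^ 2 := by
    rw [hα]; exact Real.sq_sqrt (by linarith)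
  have hcosb : Real.cos (α * x₁) ≠ 0 := by
    intro h
    rw [Real.cos_eq_zero_iff] at h
    obtain ⟨k, hk⟩ := h
    refine hx₁ k ?_
    field_simp at hk ⊢
    linarith [hk]
  have hsinb2 : (Real.sin (α * x₁)) ^ 2 < 1 := by
    have h1 := Real.sin_sq_add_cos_sq (α * x₁)
    have h2 : 0 < (Real.cos (α * x₁)) ^ 2 :=
      (sq_nonneg _).lt_of_ne (Ne.symm (pow_ne_zero 2 hcosb))
    nlinarith
  have hsecsq : ∀ x : ℝ, 1 / (Real.cos (B x / 4)) ^ 2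
      = 1 + (β * Real.sin (α * x₁) / (α * Real.cosh (β * (x + x₂)))) ^ 2 := by
    intro x
    have hBx : B x / 4
        = Real.arctan (β * Real.sin (α * x₁) / (α * Real.cosh (β * (x + x₂)))) := by
      rw [hB x]; ring
    rw [hBx, Real.cos_sq_arctan, one_div_one_div]
  have htansq : ∀ x : ℝ, (Real.tan (B x / 4)) ^ 2
      = (β * Real.sin (α * x₁) / (α * Real.cosh (β * (x + x₂)))) ^ 2 := by
    intro x
    have hBx : B x / 4
        = Real.arctan (β * Real.sin (α * x₁) / (α * Real.cosh (β * (x + x₂)))) := by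
      rw [hB x]; ring
    rw [hBx, Real.tan_arctan]
  refine ⟨?_, hsecsq, htansq, ?_⟩
  · -- part (i)
    intro x
    set a : ℝ := β * (x + x₂) with ha
    set b : ℝ := α * x₁ with hb
    have hc0 : 0 < Real.cosh a := Real.cosh_pos a
    have hc1 : 1 ≤ Real.cosh a := Real.one_le_cosh a
    set r : ℝ := Real.sin b / Real.cosh a with hrdef
    have hr : |r| < 1 := by
      have h1 : |Real.sin b| < 1 := by
        nlinarith [_root_.sq_abs (Real.sin b), abs_nonneg (Real.sin b)]
      have h2 : |r| ≤ |Real.sin b| := by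
        rw [hrdef, abs_div, abs_of_pos hc0]
        exact div_le_self (abs_nonneg _) hc1
      linarith
    have hr1 : r < 1 := (abs_lt.mp hr).2
    have hr2 : -1 < r := (abs_lt.mp hr).1
    set zu : ℂ := (a : ℂ) + (b : ℂ) * I with hzu
    set zv : ℂ := (a : ℂ) - (b : ℂ) * I with hzv
    set u : ℂ := Complex.exp zu with hu
    set v : ℂ := Complex.exp zv with hv
    set w : ℂ := Complex.I * ((Real.sin b : ℝ) : ℂ) / ((Real.cosh a : ℝ) : ℂ) with hwdef
    have hcC : ((Real.cosh a : ℝ) : ℂ) ≠ 0 := by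
      exact_mod_cast ne_of_gt hc0
    have hw_eq : w = ((r : ℝ) : ℂ) * I := by
      rw [hwdef, hrdef]; push_cast; field_simp
    have hure : u.re ≠ 0 := by
      rw [hu, Complex.exp_re]
      have : zu.re = a := by simp [hzu]
      have him : zu.im = b := by simp [hzu]
      rw [this, him]
      exact mul_ne_zero (ne_of_gt (Real.exp_pos a)) hcosb
    have hvre : v.re ≠ 0 := by
      rw [hv, Complex.exp_re]
      have : zv.re = a := by simp [hzv]
      have him : zv.im = -b := by simp [hzv]
      rw [this, him, Real.cos_neg]
      exact mul_ne_zero (ne_of_gt (Real.exp_pos a)) hcosb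
    obtain ⟨hu₁, hu₂⟩ := one_pm_mul_I_ne hure
    obtain ⟨hv₁, hv₂⟩ := one_pm_mul_I_ne hvre
    have hw1eq : 1 + w * I = ((1 - r : ℝ) : ℂ) := by
      rw [hw_eq]; push_cast; linear_combination (r : ℂ) * Complex.I_sq
    have hw2eq : 1 - w * I = ((1 + r : ℝ) : ℂ) := by
      rw [hw_eq]; push_cast; linear_combination (-r : ℂ) * Complex.I_sq
    have hw₁ : 1 + w * I ≠ 0 := by
      rw [hw1eq]; exact_mod_cast ne_of_gt (by linarith : (0:ℝ) < 1 - r)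
    have hw₂ : 1 - w * I ≠ 0 := by
      rw [hw2eq]; exact_mod_cast ne_of_gt (by linarith : (0:ℝ) < 1 + r)
    -- the product identity
    have hprod : (1 + u * I) * (1 - v * I) * (1 - w * I)
        = (1 + w * I) * (1 - u * I) * (1 + v * I) := by
      have hEne : Complex.exp ((a : ℂ)) ≠ 0 := Complex.exp_ne_zero _
      have hFne : Complex.exp ((b : ℂ) * I) ≠ 0 := Complex.exp_ne_zero _
      have huE : u = Complex.exp ((a : ℂ)) * Complex.exp ((b : ℂ) * I) := by
        rw [hu, hzu, Complex.exp_add]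
      have hvE : v = Complex.exp ((a : ℂ)) / Complex.exp ((b : ℂ) * I) := by
        rw [hv, hzv, Complex.exp_sub]
      have hsE : ((Real.sin b : ℝ) : ℂ)
          = ((Complex.exp ((b : ℂ) * I))⁻¹ - Complex.exp ((b : ℂ) * I)) * I / 2 := by
        rw [Complex.ofReal_sin, Complex.sin, neg_mul, Complex.exp_neg]
      have hcE : ((Real.cosh a : ℝ) : ℂ)
          = (Complex.exp ((a : ℂ)) + (Complex.exp ((a : ℂ)))⁻¹) / 2 := by
        rw [Complex.ofReal_cosh, Complex.cosh, Complex.exp_neg]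
      have h2 : Complex.exp ((a : ℂ)) + (Complex.exp ((a : ℂ)))⁻¹ ≠ 0 := by
        intro h
        apply hcC
        rw [hcE, h, zero_div]
      have huv : u * v = Complex.exp ((a : ℂ)) ^ 2 := by
        rw [huE, hvE]; field_simp
      have humv : (u - v) * I
          = -2 * ((Real.sin b : ℝ) : ℂ) * Complex.exp ((a : ℂ)) := by
        rw [huE, hvE, hsE]; field_simp; ring
      have hcE2 : 2 * ((Real.cosh a : ℝ) : ℂ) * Complex.exp ((a : ℂ))
          = 1 + Complex.exp ((a : ℂ)) ^ 2 := by
        rw [hcE]; field_simp; ring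
      have hrc : ((r : ℝ) : ℂ) * ((Real.cosh a : ℝ) : ℂ) = ((Real.sin b : ℝ) : ℂ) := by
        have hr' : r * Real.cosh a = Real.sin b := by
          rw [hrdef]; field_simp
        exact_mod_cast hr'
      have hwI : w * I = -((r : ℝ) : ℂ) := by
        rw [hw_eq]; linear_combination ((r : ℝ) : ℂ) * Complex.I_sq
      linear_combination 4 * Complex.exp ((a : ℂ)) * hrc
        - 2 * ((r : ℝ) : ℂ) * hcE2 + 2 * humv + 2 * ((r : ℝ) : ℂ) * huv
        - 2 * ((r : ℝ) : ℂ) * u * v * Complex.I_sq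
        - (2 - 2 * u * v * I ^ 2) * hwI
    -- real part vanishing
    have hre : (arctan u - arctan v - arctan w).re = 0 := by
      have hconj : (starRingEnd ℂ) u = v := by
        rw [hu, hv, ← Complex.exp_conj]
        congr 1
        rw [hzu, hzv]
        simp [map_add, Complex.conj_ofReal, Complex.conj_I]
        ring
      set Wu : ℂ := (1 + u * I) / (1 - u * I) with hWu
      have hconjWu : (starRingEnd ℂ) Wu = (1 - v * I) / (1 + v * I) := by
        rw [hWu, map_div₀, map_add, map_sub, map_mul, map_one, hconj, Complex.conj_I]
        ring_nf
      have him : Wu.im ≠ 0 := by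
        intro h
        have hcc : (starRingEnd ℂ) Wu = Wu := Complex.conj_eq_iff_im.mpr h
        rw [hconjWu, hWu, div_eq_div_iff hv₁ hu₂] at hcc
        have huv : u + v = 0 := by
          have h0 : (u + v) * I = 0 := by linear_combination (-1/2 : ℂ) * hcc
          exact (mul_eq_zero.mp h0).resolve_right Complex.I_ne_zero
        have hsum : u.re + v.re = 0 := by
          have := congrArg Complex.re huv; simpa using this
        have hue : u.re = Real.exp a * Real.cos b := by
          rw [hu, Complex.exp_re]
          congr 1 <;> simp [hzu]
        have hve : v.re = Real.exp a * Real.cos b := by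
          rw [hv, Complex.exp_re]
          have h1 : zv.re = a := by simp [hzv]
          have h2 : zv.im = -b := by simp [hzv]
          rw [h1, h2, Real.cos_neg]
        have : Real.exp a * Real.cos b = 0 := by
          rw [hue, hve] at hsum; linarith
        rcases mul_eq_zero.mp this with h' | h'
        · exact (Real.exp_pos a).ne' h'
        · exact hcosb h'
      have hargne : Wu.arg ≠ Real.pi := by
        intro h
        exact him (Complex.arg_eq_pi_iff.mp h).2
      have hc' : ((starRingEnd ℂ) Wu).arg = -Wu.arg := by
        rw [Complex.arg_conj, if_neg hargne]
      have hWv : (1 + v * I) / (1 - v * I) = ((starRingEnd ℂ) Wu)⁻¹ := by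
        rw [hconjWu, inv_div]
      have hargv : ((1 + v * I) / (1 - v * I)).arg = Wu.arg := by
        rw [hWv, Complex.arg_inv, hc',
          if_neg (by intro h; have := Complex.neg_pi_lt_arg Wu; linarith), neg_neg]
      have hwre : (arctan w).re = 0 := by
        rw [arctan_re_eq_arg, hw1eq, hw2eq,
          show ((1 - r : ℝ) : ℂ) / ((1 + r : ℝ) : ℂ) = (((1 - r) / (1 + r) : ℝ) : ℂ) by
            push_cast; ring,
          Complex.arg_ofReal_of_nonneg (div_nonneg (by linarith) (by linarith))]
        norm_num
      rw [sub_re, sub_re, hwre, arctan_re_eq_arg, arctan_re_eq_arg, hargv, ← hWu]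
      ring
    have hmain := arctan_sub_eq hu₁ hu₂ hv₁ hv₂ hw₁ hw₂ hprod hre
    have e1 : (β : ℂ) * ((x : ℂ) + (x₂ : ℂ)) + Complex.I * (α : ℂ) * (x₁ : ℂ) = zu := by
      rw [hzu, ha, hb]; push_cast; ring
    have e2 : (β : ℂ) * ((x : ℂ) + (x₂ : ℂ)) - Complex.I * (α : ℂ) * (x₁ : ℂ) = zv := by
      rw [hzv, ha, hb]; push_cast; ring
    rw [hK x, hKbar x, e1, e2, ← hu, ← hv]
    linear_combination 4 * hmain
  · -- part (iii)
    intro ℓ x hden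
    have hc0 : (0:ℝ) < Real.cosh (β * (x + x₂)) := Real.cosh_pos _
    have hαC : ((α : ℝ) : ℂ) ≠ 0 := by exact_mod_cast ne_of_gt hα0
    have hcC : ((Real.cosh (β * (x + x₂)) : ℝ) : ℂ) ≠ 0 := by
      exact_mod_cast ne_of_gt hc0
    have hDr : (0:ℝ) < α ^ 2 * (Real.cosh (β * (x + x₂))) ^ 2
        + β ^ 2 * (Real.sin (α * x₁)) ^ 2 :=
      add_pos_of_pos_of_nonneg
        (mul_pos (pow_pos hα0 2) (pow_pos hc0 2)) (by positivity)
    have hDC : (α : ℂ) ^ 2 * ((Real.cosh (β * (x + x₂)) : ℝ) : ℂ) ^ 2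
        + (β : ℂ) ^ 2 * ((Real.sin (α * x₁) : ℝ) : ℂ) ^ 2 ≠ 0 := by
      have : ((α ^ 2 * (Real.cosh (β * (x + x₂))) ^ 2
          + β ^ 2 * (Real.sin (α * x₁)) ^ 2 : ℝ) : ℂ) ≠ 0 := by
        exact_mod_cast ne_of_gt hDr
      push_cast at this
      convert this using 2 <;> norm_cast
    have e1 : (1 : ℂ) / ((Real.cos (B x / 4) : ℝ) : ℂ) ^ 2
        = (((1 + (β * Real.sin (α * x₁) / (α * Real.cosh (β * (x + x₂)))) ^ 2 : ℝ)) : ℂ) := by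
      rw [← hsecsq x]; push_cast; ring
    have e2 : (((Real.tan (B x / 4) : ℝ)) : ℂ) ^ 2
        = (((β * Real.sin (α * x₁) / (α * Real.cosh (β * (x + x₂)))) ^ 2 : ℝ) : ℂ) := by
      rw [← htansq x]; push_cast; ring
    rw [hBt x, e1, e2]
    simp only [Complex.ofReal_div, Complex.ofReal_mul, Complex.ofReal_add,
      Complex.ofReal_pow, Complex.ofReal_one, Complex.ofReal_ofNat]
    linear_combination aux_div (α : ℂ) (β : ℂ) ((Real.cosh (β * (x + x₂)) : ℝ) : ℂ)
      ((Real.sin (α * x₁) : ℝ) : ℂ) ((Real.cos (α * x₁) : ℝ) : ℂ) ℓ hαC hcC hDC hden
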